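/- Let φ: [0,∞) → [0,∞) be continuous, nondecreasing, positive on (0,∞), with φ(0)=0, satisfying ∫₀^ε (∫₀^s φ(r) dr)^{−1/2} ds < ∞ for some ε > 0. Define Q(t) = (1/2)∫₀^t (∫₀^s φ(r) dr)^{−1/2} ds and let R: [0,ρ̄) → [0,∞) be the inverse of Q. Then R is twice differentiable on (0, ρ̄) and satisfies R''(x) = 2 φ(R(x)) for every x ∈ (0, ρ̄). -/

import Mathlib

open Set MeasureTheory Filter
open scoped Topology

/-- The inverse function `R` of `Q(t) = (1/2)∫₀ᵗ (∫₀ˢ φ(r) dr)^{-1/2} ds` is twice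
differentiable on the image of `(0,∞)` under `Q` (i.e. on `(0, ρ̄)`) and satisfies
the ODE `R'' = 2 φ(R)` there. -/
theorem R_satisfies_ODE (φ : ℝ → ℝ)
    (hφ_cont : ContinuousOn φ (Ici 0)) (hφ_mono : MonotoneOn φ (Ici 0))
    (hφ0 : φ 0 = 0) (hφ_pos : ∀ t : ℝ, 0 < t → 0 < φ t)
    (hint : ∃ ε : ℝ, 0 < ε ∧
      IntegrableOn (fun s => (∫ r in (0:ℝ)..s, φ r) ^ (-(1/2) : ℝ)) (Ioc 0 ε))
    (Q : ℝ → ℝ)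
    (hQ : ∀ t : ℝ, Q t = (1/2) * ∫ s in (0:ℝ)..t, (∫ r in (0:ℝ)..s, φ r) ^ (-(1/2) : ℝ))
    (R : ℝ → ℝ) (hR : ∀ t ∈ Ici (0:ℝ), R (Q t) = t) :
    ∀ x ∈ Q '' (Ioi 0), DifferentiableAt ℝ R x ∧ DifferentiableAt ℝ (deriv R) x ∧
      deriv (deriv R) x = 2 * φ (R x) := by
  set F : ℝ → ℝ := fun s => ∫ r in (0:ℝ)..s, φ r with hFdef
  set g : ℝ → ℝ := fun s => F s ^ (-(1/2) : ℝ) with hgdef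
  have hφ_nonneg : ∀ r : ℝ, 0 ≤ r → 0 ≤ φ r := fun r hr => by
    simpa [hφ0] using hφ_mono (self_mem_Ici) hr hr
  have hφ_int : ∀ T : ℝ, 0 ≤ T → IntervalIntegrable φ volume 0 T := fun T hT =>
    (hφ_cont.mono (Icc_subset_Ici_self)).intervalIntegrable_of_Icc hT
  have hF_deriv : ∀ t : ℝ, 0 < t → HasDerivAt F (φ t) t := by
    intro t ht
    exact intervalIntegral.integral_hasDerivAt_right (hφ_int t ht.le)
      ⟨Ici 0, Ici_mem_nhds ht, hφ_cont.aestronglyMeasurable measurableSet_Ici⟩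
      (hφ_cont.continuousAt (Ici_mem_nhds ht))
  have hF_pos : ∀ t : ℝ, 0 < t → 0 < F t := by
    intro t ht
    have h1 : F t = (∫ r in (0:ℝ)..(t/2), φ r) + ∫ r in (t/2)..t, φ r := by
      rw [hFdef]
      exact (intervalIntegral.integral_add_adjacent_intervals (hφ_int _ (by linarith))
        (((hφ_cont.mono (fun u hu => mem_Ici.2 (by linarith [mem_Icc.1 hu |>.1]))).intervalIntegrable_of_Icc
          (by linarith)))).symm
    have h2 : 0 ≤ ∫ r in (0:ℝ)..(t/2), φ r :=
      intervalIntegral.integral_nonneg (by linarith) (fun u hu => hφ_nonneg u hu.1)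
    have h3 : (t - t/2) * φ (t/2) ≤ ∫ r in (t/2)..t, φ r := by
      have := intervalIntegral.integral_mono_on (μ := volume) (f := fun _ => φ (t/2)) (g := φ)
        (by linarith : t/2 ≤ t) (intervalIntegrable_const)
        ((hφ_cont.mono (fun u hu => mem_Ici.2 (by linarith [mem_Icc.1 hu |>.1]))).intervalIntegrable_of_Icc
          (by linarith))
        (fun u hu => hφ_mono (mem_Ici.2 (by linarith) : (t/2:ℝ) ∈ Ici (0:ℝ))
          (le_trans (by linarith) hu.1 : (0:ℝ) ≤ u) hu.1)
      simpa using this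
    have := hφ_pos (t/2) (by linarith)
    nlinarith
  have hg_cont : ContinuousOn g (Ioi 0) := by
    intro t ht
    have h1 : ContinuousAt F t := (hF_deriv t ht).continuousAt
    have h2 : ContinuousAt (fun z : ℝ => z ^ (-(1/2):ℝ)) (F t) :=
      Real.continuousAt_rpow_const _ _ (Or.inl (hF_pos t ht).ne')
    exact (h2.comp h1).continuousWithinAt
  have hg_pos : ∀ t : ℝ, 0 < t → 0 < g t := fun t ht => Real.rpow_pos_of_pos (hF_pos t ht) _
  obtain ⟨ε, hε, hεint⟩ := hint
  have hg_int : ∀ T : ℝ, 0 < T → IntegrableOn g (Ioc 0 T) := by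
    intro T hT
    rcases le_or_gt T ε with h | h
    · exact hεint.mono_set (Ioc_subset_Ioc_right h)
    · have heq : Ioc (0:ℝ) T = Ioc 0 ε ∪ Ioc ε T := (Ioc_union_Ioc_eq_Ioc hε.le h.le).symm
      rw [heq]
      refine hεint.union ?_
      have hc : ContinuousOn g (Icc ε T) := hg_cont.mono (fun u hu => lt_of_lt_of_le hε hu.1)
      exact (hc.integrableOn_Icc).mono_set Ioc_subset_Icc_self
  have hQ_deriv : ∀ t : ℝ, 0 < t → HasDerivAt Q ((1/2) * g t) t := by
    intro t ht
    have hii : IntervalIntegrable g volume 0 t :=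
      (intervalIntegrable_iff_integrableOn_Ioc_of_le ht.le).2 (hg_int t ht)
    have h1 : HasDerivAt (fun u => ∫ s in (0:ℝ)..u, g s) (g t) t :=
      intervalIntegral.integral_hasDerivAt_right hii
        ⟨Ioi 0, Ioi_mem_nhds ht, hg_cont.aestronglyMeasurable measurableSet_Ioi⟩
        (hg_cont.continuousAt (Ioi_mem_nhds ht))
    have hQe : Q = fun u => (1/2) * ∫ s in (0:ℝ)..u, g s := funext hQ
    rw [hQe]
    exact h1.const_mul _
  -- neighborhood structure around Q t for t > 0
  have nbhd : ∀ t : ℝ, 0 < t → ∀ᶠ y in 𝓝 (Q t), ∃ s : ℝ, 0 < s ∧ Q s = y ∧ R y = s := by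
    intro t ht
    have ha : (0:ℝ) < t/2 := by linarith
    have hQcont : ContinuousOn Q (Icc (t/2) (t+1)) := fun u hu =>
      ((hQ_deriv u (lt_of_lt_of_le ha hu.1)).continuousAt).continuousWithinAt
    have hQmono : StrictMonoOn Q (Icc (t/2) (t+1)) := by
      apply strictMonoOn_of_deriv_pos (convex_Icc _ _) hQcont
      intro u hu
      rw [interior_Icc] at hu
      rw [(hQ_deriv u (ha.trans hu.1)).deriv]
      exact mul_pos (by norm_num) (hg_pos u (ha.trans hu.1))
    have hx₀ : Q t ∈ Ioo (Q (t/2)) (Q (t+1)) :=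
      ⟨hQmono ⟨le_refl _, by linarith⟩ ⟨by linarith, by linarith⟩ (by linarith),
       hQmono ⟨by linarith, by linarith⟩ ⟨by linarith, le_refl _⟩ (by linarith)⟩
    filter_upwards [Ioo_mem_nhds hx₀.1 hx₀.2] with y hy
    obtain ⟨s, hs, hQs⟩ := intermediate_value_Icc (by linarith : t/2 ≤ t+1) hQcont
      (Ioo_subset_Icc_self hy)
    exact ⟨s, lt_of_lt_of_le ha hs.1, hQs, by rw [← hQs, hR s (le_trans ha.le hs.1)]⟩
  -- the key first-derivative statement
  have key : ∀ t : ℝ, 0 < t → HasDerivAt R (2 * F t ^ ((1/2):ℝ)) (Q t) := by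
    intro t ht
    have ha : (0:ℝ) < t/2 := by linarith
    have hQcont : ContinuousOn Q (Icc (t/2) (t+1)) := fun u hu =>
      ((hQ_deriv u (lt_of_lt_of_le ha hu.1)).continuousAt).continuousWithinAt
    have hQmono : StrictMonoOn Q (Icc (t/2) (t+1)) := by
      apply strictMonoOn_of_deriv_pos (convex_Icc _ _) hQcont
      intro u hu
      rw [interior_Icc] at hu
      rw [(hQ_deriv u (ha.trans hu.1)).deriv]
      exact mul_pos (by norm_num) (hg_pos u (ha.trans hu.1))
    have hx₀ : Q t ∈ Ioo (Q (t/2)) (Q (t+1)) :=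
      ⟨hQmono ⟨le_refl _, by linarith⟩ ⟨by linarith, by linarith⟩ (by linarith),
       hQmono ⟨by linarith, by linarith⟩ ⟨by linarith, le_refl _⟩ (by linarith)⟩
    have hs₀nhds : Ioo (Q (t/2)) (Q (t+1)) ∈ 𝓝 (Q t) := Ioo_mem_nhds hx₀.1 hx₀.2
    have hmem : ∀ x ∈ Icc (Q (t/2)) (Q (t+1)), ∃ s ∈ Icc (t/2) (t+1), Q s = x ∧ R x = s := by
      intro x hx
      obtain ⟨s, hs, hQs⟩ := intermediate_value_Icc (by linarith : t/2 ≤ t+1) hQcont hx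
      exact ⟨s, hs, hQs, by rw [← hQs, hR s (le_trans ha.le hs.1)]⟩
    have hRQt : R (Q t) = t := hR t ht.le
    have hRmono : MonotoneOn R (Ioo (Q (t/2)) (Q (t+1))) := by
      intro x hx y hy hxy
      obtain ⟨s, hs, hQs, hRs⟩ := hmem x (Ioo_subset_Icc_self hx)
      obtain ⟨s', hs', hQs', hRs'⟩ := hmem y (Ioo_subset_Icc_self hy)
      rw [hRs, hRs']
      by_contra hcon
      push_neg at hcon
      have := hQmono hs' hs hcon
      rw [hQs, hQs'] at this
      linarith
    have himg : R '' Ioo (Q (t/2)) (Q (t+1)) ∈ 𝓝 (R (Q t)) := by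
      rw [hRQt]
      refine mem_of_superset (Ioo_mem_nhds (by linarith : t/2 < t) (by linarith : t < t+1)) ?_
      intro s hs
      have hQs : Q s ∈ Ioo (Q (t/2)) (Q (t+1)) :=
        ⟨hQmono ⟨le_refl _, by linarith [hs.2]⟩ ⟨hs.1.le, hs.2.le⟩ hs.1,
         hQmono ⟨hs.1.le, hs.2.le⟩ ⟨by linarith [hs.1], le_refl _⟩ hs.2⟩
      exact ⟨Q s, hQs, hR s (mem_Ici.2 (ha.trans hs.1).le)⟩
    have hRcont : ContinuousAt R (Q t) :=
      continuousAt_of_monotoneOn_of_image_mem_nhds hRmono hs₀nhds himg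
    have hfg : ∀ᶠ y in 𝓝 (Q t), Q (R y) = y := by
      filter_upwards [nbhd t ht] with y ⟨s, hs, hQs, hRs⟩
      rw [hRs, hQs]
    have hQ' : HasDerivAt Q ((1/2) * g t) (R (Q t)) := by
      rw [hRQt]; exact hQ_deriv t ht
    have hne : (1/2 : ℝ) * g t ≠ 0 := (mul_pos (by norm_num) (hg_pos t ht)).ne'
    have hd := HasDerivAt.of_local_left_inverse hRcont hQ' hne hfg
    refine hd.congr_deriv ?_
    rw [hgdef]
    simp only
    rw [mul_inv, Real.rpow_neg (hF_pos t ht).le, inv_inv]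
    norm_num
  -- conclusion
  rintro x ⟨t, ht, rfl⟩
  have ht : (0:ℝ) < t := ht
  have hRQt : R (Q t) = t := hR t ht.le
  have heq : deriv R =ᶠ[𝓝 (Q t)] fun x => 2 * F (R x) ^ ((1/2):ℝ) := by
    filter_upwards [nbhd t ht] with y ⟨s, hs, hQs, hRs⟩
    rw [hRs, ← hQs, (key s hs).deriv]
  have hFt := hF_pos t ht
  have hRd := key t ht
  have hFd : HasDerivAt F (φ t) (R (Q t)) := by rw [hRQt]; exact hF_deriv t ht
  have hFR : HasDerivAt (fun x => F (R x)) (φ t * (2 * F t ^ ((1/2):ℝ))) (Q t) :=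
    hFd.comp (Q t) hRd
  have hrpow : HasDerivAt (fun z : ℝ => z ^ ((1/2):ℝ))
      ((1/2) * F t ^ ((1/2:ℝ) - 1)) (F (R (Q t))) := by
    rw [hRQt]
    exact Real.hasDerivAt_rpow_const (Or.inl hFt.ne')
  have hcomp : HasDerivAt (fun x => F (R x) ^ ((1/2):ℝ))
      ((1/2) * F t ^ ((1/2:ℝ) - 1) * (φ t * (2 * F t ^ ((1/2):ℝ)))) (Q t) :=
    HasDerivAt.comp (h₂ := fun z : ℝ => z ^ ((1/2):ℝ)) (Q t) hrpow hFR
  have hh : HasDerivAt (fun x => 2 * F (R x) ^ ((1/2):ℝ)) (2 * φ t) (Q t) := by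
    have h2 := hcomp.const_mul (2:ℝ)
    refine h2.congr_deriv ?_
    have hprod : F t ^ ((1/2:ℝ) - 1) * F t ^ ((1/2):ℝ) = 1 := by
      rw [← Real.rpow_add hFt]
      norm_num
    linear_combination 2 * φ t * hprod
  refine ⟨hRd.differentiableAt, ?_, ?_⟩
  · exact (heq.differentiableAt_iff).2 hh.differentiableAt
  · rw [heq.deriv_eq, hh.deriv, hRQt]
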